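/- For k=2 and a nonnegative symmetric balancing function Ŝ with Ŝ(∅)=0 and Ŝ(C)>0 for ∅≠C⊊V: the optimal value of min over F ∈ ℝ_+^{n×2} with rows in the simplex of ∑_{l=1}^2 TV(F_l)/S(F_l) equals min over partitions (C_1,C_2) of V into two nonempty sets of ∑_{i=1}^2 cut(C_i, V∖C_i)/Ŝ(C_i), given that min_{f ∈ ℝ^V non-constant} TV(f)/S(f) = min_{∅≠C⊊V} cut(C,V∖C)/Ŝ(C) (exact relaxation for a single ratio). -/

import Mathlib

open Finset

/-- Lovasz extension of a set function `Sh` on `V = Fin n`. -/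
noncomputable def lovasz {n : ℕ} (Sh : Finset (Fin n) → ℝ) (f : Fin n → ℝ) : ℝ :=
  ∑ i : Fin n,
    f (Tuple.sort f i) *
      (Sh (if (i : ℕ) = 0 then Finset.univ
            else Finset.univ.filter
              (fun j => f (Tuple.sort f ⟨(i : ℕ) - 1, lt_of_le_of_lt (Nat.sub_le _ _) i.isLt⟩) < f j))
        - Sh (Finset.univ.filter (fun j => f (Tuple.sort f i) < f j)))

/-- cut(A,B) = ∑_{i∈A, j∈B} w_{ij}. -/
noncomputable def cutF {n : ℕ} (W : Matrix (Fin n) (Fin n) ℝ) (A B : Finset (Fin n)) : ℝ :=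
  ∑ i ∈ A, ∑ j ∈ B, W i j

/-- Total variation TV(f) = (1/2) ∑_{i,j} w_{ij} |f_i - f_j|. -/
noncomputable def tv {n : ℕ} (W : Matrix (Fin n) (Fin n) ℝ) (f : Fin n → ℝ) : ℝ :=
  (1 / 2) * ∑ i : Fin n, ∑ j : Fin n, W i j * |f i - f j|

/-- Indicator vector of a set. -/
noncomputable def indic {n : ℕ} (A : Finset (Fin n)) : Fin n → ℝ :=
  fun i => if i ∈ A then 1 else 0

lemma sorted_indic {n : ℕ} (C : Finset (Fin n)) (i : Fin n) :
    indic C (Tuple.sort (indic C) i) = if (i : ℕ) < Cᶜ.card then 0 else 1 := by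
  set f : Fin n → ℝ := indic C with hf
  set g : Fin n → ℝ := f ∘ Tuple.sort f with hg
  have hmono : Monotone g := Tuple.monotone_sort f
  have hvals : ∀ j, g j = 0 ∨ g j = 1 := by
    intro j
    simp only [hg, hf, indic, Function.comp]
    split <;> simp
  have hdown : ∀ ⦃a b : Fin n⦄, a ≤ b → g b = 0 → g a = 0 := by
    intro a b hab hb
    rcases hvals a with h | h
    · exact h
    · have := hmono hab; rw [h, hb] at this; linarith
  set A : Finset (Fin n) := univ.filter fun j => g j = 0 with hA
  have hcard : A.card = Cᶜ.card := by
    have h1 : A.card = (univ.filter fun j => f j = 0).card := by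
      apply Finset.card_bij (fun a _ => Tuple.sort f a)
      · intro a ha
        simp only [hA, mem_filter, mem_univ, true_and] at ha ⊢
        exact ha
      · intro a _ b _ hab
        exact (Tuple.sort f).injective hab
      · intro b hb
        refine ⟨(Tuple.sort f).symm b, ?_, by simp⟩
        simp only [hA, mem_filter, mem_univ, true_and, hg, Function.comp, Equiv.apply_symm_apply]
        simpa using hb
    rw [h1]
    congr 1
    ext j
    simp only [mem_filter, mem_univ, true_and, hf, indic, mem_compl]
    split <;> simp [*]
  have key : ∀ j : Fin n, g j = 0 ↔ (j : ℕ) < Cᶜ.card := by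
    intro j
    constructor
    · intro hj
      by_contra hlt
      push_neg at hlt
      have hsub : Finset.Iic j ⊆ A := by
        intro a ha
        simp only [mem_Iic] at ha
        simp only [hA, mem_filter, mem_univ, true_and]
        exact hdown ha hj
      have := Finset.card_le_card hsub
      rw [Fin.card_Iic, hcard] at this
      omega
    · intro hj
      by_contra hne
      have hsub : A ⊆ Finset.Iio j := by
        intro a ha
        simp only [hA, mem_filter, mem_univ, true_and] at ha
        simp only [mem_Iio]
        by_contra hge
        push_neg at hge
        exact hne (hdown hge ha)
      have := Finset.card_le_card hsub
      rw [Fin.card_Iio, hcard] at this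
      omega
  show g i = _
  split
  · exact (key i).mpr (by assumption)
  · rcases hvals i with h | h
    · exact absurd ((key i).mp h) (by assumption)
    · exact h

lemma filter_lt_indic_zero {n : ℕ} (C : Finset (Fin n)) :
    (univ.filter fun j => (0 : ℝ) < indic C j) = C := by
  ext j; simp only [mem_filter, mem_univ, true_and]
  by_cases h : j ∈ C <;> simp [indic, h]

lemma filter_lt_indic_one {n : ℕ} (C : Finset (Fin n)) :
    (univ.filter fun j => (1 : ℝ) < indic C j) = ∅ := by
  ext j; simp only [mem_filter, mem_univ, true_and, notMem_empty, iff_false]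
  by_cases h : j ∈ C <;> simp [indic, h]

lemma lovasz_const {n : ℕ} (Sh : Finset (Fin n) → ℝ) (h0 : Sh ∅ = 0)
    (hu : Sh univ = 0) (a : ℝ) : lovasz Sh (fun _ => a) = 0 := by
  unfold lovasz
  apply Finset.sum_eq_zero
  intro i _
  have he : (univ.filter fun (_ : Fin n) => a < a) = ∅ := by
    simp [lt_irrefl]
  split <;> simp [he, h0, hu]

lemma lovasz_indic {n : ℕ} (Sh : Finset (Fin n) → ℝ) (h0 : Sh ∅ = 0)
    (C : Finset (Fin n)) (hne : C.Nonempty) (hnu : C ≠ univ) :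
    lovasz Sh (indic C) = Sh C := by
  set m := Cᶜ.card with hm
  have hm1 : 1 ≤ m := Finset.card_pos.mpr (by
    rw [Finset.nonempty_iff_ne_empty]
    simpa [Finset.compl_eq_empty_iff] using hnu)
  have hmn : m < n := by
    have : Cᶜ ≠ univ := by
      simpa [Finset.compl_eq_univ_iff] using hne.ne_empty
    have := Finset.card_lt_card (Finset.ssubset_univ_iff.mpr this)
    simpa using this
  unfold lovasz
  rw [Finset.sum_eq_single_of_mem (⟨m, hmn⟩ : Fin n) (mem_univ _)]
  · rw [sorted_indic]
    simp only [Fin.val_mk, ← hm]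
    rw [if_neg (Nat.not_lt.mpr le_rfl), if_neg (by omega : ¬ m = 0)]
    have h1 : indic C (Tuple.sort (indic C)
        ⟨m - 1, lt_of_le_of_lt (Nat.sub_le _ _) hmn⟩) = 0 := by
      rw [sorted_indic]
      simp only [Fin.val_mk, ← hm]
      rw [if_pos (by omega)]
    rw [h1, filter_lt_indic_zero, filter_lt_indic_one, h0]
    ring
  · intro i _ hi
    rcases lt_or_gt_of_ne (fun h => hi (Fin.ext h) : (i : ℕ) ≠ m) with h | h
    · rw [sorted_indic, ← hm, if_pos h, zero_mul]
    · rw [sorted_indic, ← hm, if_neg (by omega)]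
      rw [if_neg (by omega : ¬ ((i : ℕ) = 0))]
      have h1 : indic C (Tuple.sort (indic C)
          ⟨(i : ℕ) - 1, lt_of_le_of_lt (Nat.sub_le _ _) i.isLt⟩) = 1 := by
        rw [sorted_indic]
        simp only [Fin.val_mk, ← hm]
        rw [if_neg (by omega)]
      rw [h1, filter_lt_indic_one, h0]
      ring

lemma cut_symm {n : ℕ} (W : Matrix (Fin n) (Fin n) ℝ) (hWsym : ∀ i j, W i j = W j i)
    (A B : Finset (Fin n)) : cutF W A B = cutF W B A := by
  unfold cutF
  refine Finset.sum_comm.trans ?_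
  exact Finset.sum_congr rfl fun i _ => Finset.sum_congr rfl fun j _ => hWsym j i

lemma tv_indic {n : ℕ} (W : Matrix (Fin n) (Fin n) ℝ) (hWsym : ∀ i j, W i j = W j i)
    (C : Finset (Fin n)) : tv W (indic C) = cutF W C Cᶜ := by
  unfold tv
  have split_i : ∀ g : Fin n → ℝ, ∑ i : Fin n, g i = ∑ i ∈ C, g i + ∑ i ∈ Cᶜ, g i :=
    fun g => (Finset.sum_add_sum_compl C g).symm
  rw [split_i]
  have h1 : ∀ i ∈ C, ∑ j : Fin n, W i j * |indic C i - indic C j|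
      = ∑ j ∈ Cᶜ, W i j := by
    intro i hi
    rw [split_i]
    have e1 : ∑ j ∈ C, W i j * |indic C i - indic C j| = 0 := by
      apply Finset.sum_eq_zero; intro j hj; simp [indic, hi, hj]
    have e2 : ∑ j ∈ Cᶜ, W i j * |indic C i - indic C j| = ∑ j ∈ Cᶜ, W i j := by
      apply Finset.sum_congr rfl; intro j hj
      rw [Finset.mem_compl] at hj
      simp [indic, hi, hj]
    rw [e1, e2, zero_add]
  have h2 : ∀ i ∈ Cᶜ, ∑ j : Fin n, W i j * |indic C i - indic C j|
      = ∑ j ∈ C, W i j := by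
    intro i hi
    rw [Finset.mem_compl] at hi
    rw [split_i]
    have e1 : ∑ j ∈ C, W i j * |indic C i - indic C j| = ∑ j ∈ C, W i j := by
      apply Finset.sum_congr rfl; intro j hj
      simp [indic, hi, hj]
    have e2 : ∑ j ∈ Cᶜ, W i j * |indic C i - indic C j| = 0 := by
      apply Finset.sum_eq_zero; intro j hj
      rw [Finset.mem_compl] at hj
      simp [indic, hi, hj]
    rw [e1, e2, add_zero]
  rw [Finset.sum_congr rfl h1, Finset.sum_congr rfl h2]
  have : (∑ i ∈ Cᶜ, ∑ j ∈ C, W i j) = cutF W C Cᶜ := by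
    rw [show (∑ i ∈ Cᶜ, ∑ j ∈ C, W i j) = cutF W Cᶜ C from rfl, cut_symm W hWsym]
  rw [this]
  show (1/2) * (cutF W C Cᶜ + cutF W C Cᶜ) = cutF W C Cᶜ
  ring

/-- Exact continuous relaxation of the balanced 2-cut problem: the optimal value
of the simplex-constrained continuous problem for k = 2 equals the optimal
balanced 2-cut, given the exact single-ratio relaxation result. -/
theorem exact_relaxation_k2 {n : ℕ} (W : Matrix (Fin n) (Fin n) ℝ)
    (hW : ∀ i j, 0 ≤ W i j) (hWsym : ∀ i j, W i j = W j i)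
    (Sh : Finset (Fin n) → ℝ) (h0 : Sh ∅ = 0) (hnn : ∀ A, 0 ≤ Sh A)
    (hsym : ∀ A : Finset (Fin n), Sh A = Sh Aᶜ)
    (hpos : ∀ C : Finset (Fin n), C.Nonempty → C ≠ Finset.univ → 0 < Sh C)
    (c : ℝ)
    (hsingle : IsLeast {r : ℝ | ∃ f : Fin n → ℝ,
        (¬ ∃ a : ℝ, ∀ i, f i = a) ∧ r = tv W f / lovasz Sh f} c)
    (hcut : IsLeast {r : ℝ | ∃ C : Finset (Fin n),
        C.Nonempty ∧ C ≠ Finset.univ ∧ r = cutF W C Cᶜ / Sh C} c) :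
    ∃ p : ℝ,
      IsLeast {r : ℝ | ∃ F : Fin n → Fin 2 → ℝ,
          (∀ i l, 0 ≤ F i l) ∧ (∀ i, ∑ l, F i l = 1) ∧
          (∀ l, 0 < lovasz Sh (fun i => F i l)) ∧
          r = ∑ l, tv W (fun i => F i l) / lovasz Sh (fun i => F i l)} p ∧
      IsLeast {r : ℝ | ∃ C : Finset (Fin n), C.Nonempty ∧ C ≠ Finset.univ ∧
          r = cutF W C Cᶜ / Sh C + cutF W Cᶜ C / Sh Cᶜ} p := by
  have hu : Sh univ = 0 := by
    have := hsym ∅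
    rw [h0, Finset.compl_empty] at this
    exact this.symm
  -- the flipped ratio equals the original ratio
  have flip : ∀ C : Finset (Fin n), cutF W Cᶜ C / Sh Cᶜ = cutF W C Cᶜ / Sh C := by
    intro C
    rw [cut_symm W hWsym, ← hsym]
  obtain ⟨C₀, hC₀ne, hC₀nu, hC₀val⟩ := hcut.1
  have hC₀cne : C₀ᶜ.Nonempty := by
    rw [Finset.nonempty_iff_ne_empty]
    simpa [Finset.compl_eq_empty_iff] using hC₀nu
  have hC₀cnu : C₀ᶜ ≠ univ := by
    simpa [Finset.compl_eq_univ_iff] using hC₀ne.ne_empty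
  have lov0 : lovasz Sh (indic C₀) = Sh C₀ := lovasz_indic Sh h0 C₀ hC₀ne hC₀nu
  have lov1 : lovasz Sh (indic C₀ᶜ) = Sh C₀ᶜ := lovasz_indic Sh h0 C₀ᶜ hC₀cne hC₀cnu
  have e0 : (fun i => if (0 : Fin 2) = 0 then indic C₀ i else indic C₀ᶜ i) = indic C₀ := by
    funext i; simp
  have e1 : (fun i => if (1 : Fin 2) = 0 then indic C₀ i else indic C₀ᶜ i) = indic C₀ᶜ := by
    funext i; norm_num
  refine ⟨2 * c, ⟨⟨fun i l => if l = 0 then indic C₀ i else indic C₀ᶜ i, ?_, ?_, ?_, ?_⟩, ?_⟩,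
    ⟨⟨C₀, hC₀ne, hC₀nu, ?_⟩, ?_⟩⟩
  · intro i l
    dsimp only
    split <;> · unfold indic; split <;> norm_num
  · intro i
    rw [Fin.sum_univ_two]
    show (if (0 : Fin 2) = 0 then indic C₀ i else indic C₀ᶜ i)
      + (if (1 : Fin 2) = 0 then indic C₀ i else indic C₀ᶜ i) = 1
    norm_num
    by_cases h : i ∈ C₀ <;> simp [indic, h]
  · intro l
    fin_cases l
    · show 0 < lovasz Sh fun i => if (0 : Fin 2) = 0 then indic C₀ i else indic C₀ᶜ i
      rw [e0, lov0]
      exact hpos C₀ hC₀ne hC₀nu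
    · show 0 < lovasz Sh fun i => if (1 : Fin 2) = 0 then indic C₀ i else indic C₀ᶜ i
      rw [e1, lov1]
      exact hpos C₀ᶜ hC₀cne hC₀cnu
  · rw [Fin.sum_univ_two]
    show 2 * c = tv W (fun i => if (0 : Fin 2) = 0 then indic C₀ i else indic C₀ᶜ i)
        / lovasz Sh (fun i => if (0 : Fin 2) = 0 then indic C₀ i else indic C₀ᶜ i)
      + tv W (fun i => if (1 : Fin 2) = 0 then indic C₀ i else indic C₀ᶜ i)
        / lovasz Sh (fun i => if (1 : Fin 2) = 0 then indic C₀ i else indic C₀ᶜ i)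
    rw [e0, e1, lov0, lov1, tv_indic W hWsym, tv_indic W hWsym, compl_compl, flip, ← hC₀val]
    ring
  · -- lower bound for the continuous problem
    rintro r ⟨F, hFnn, hFsum, hFpos, rfl⟩
    have key : ∀ l : Fin 2, c ≤ tv W (fun i => F i l) / lovasz Sh (fun i => F i l) := by
      intro l
      apply hsingle.2
      refine ⟨fun i => F i l, ?_, rfl⟩
      rintro ⟨a, ha⟩
      have : (fun i => F i l) = fun _ => a := funext ha
      have hz := hFpos l
      rw [this, lovasz_const Sh h0 hu] at hz
      exact lt_irrefl 0 hz
    rw [Fin.sum_univ_two]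
    have := key 0
    have := key 1
    linarith
  · rw [flip, ← hC₀val]; ring
  · rintro r ⟨C, hCne, hCnu, rfl⟩
    have h1 : c ≤ cutF W C Cᶜ / Sh C := hcut.2 ⟨C, hCne, hCnu, rfl⟩
    rw [flip]
    linarith
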